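/- Let G be a group and let M₁ and M₂ be vast subsets of G. Then M₁ ∩ M₂ is a vast subset of G. -/
import Mathlib


open Pointwise

lemma ramsey_aux {α : Type*} (r : α → α → Prop) (hsym : ∀ a b, r a b → r b a) :
    ∀ p q : ℕ, ∃ n : ℕ, ∀ P : Finset α, n ≤ P.card →
      (∃ S ⊆ P, S.card = p ∧ ∀ a ∈ S, ∀ b ∈ S, a ≠ b → r a b) ∨
      (∃ S ⊆ P, S.card = q ∧ ∀ a ∈ S, ∀ b ∈ S, a ≠ b → ¬ r a b) := by
  classical
  suffices H : ∀ k p q : ℕ, p + q ≤ k → ∃ n : ℕ, ∀ P : Finset α, n ≤ P.card →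
      (∃ S ⊆ P, S.card = p ∧ ∀ a ∈ S, ∀ b ∈ S, a ≠ b → r a b) ∨
      (∃ S ⊆ P, S.card = q ∧ ∀ a ∈ S, ∀ b ∈ S, a ≠ b → ¬ r a b) from
    fun p q => H (p + q) p q le_rfl
  intro k
  induction k with
  | zero =>
    intro p q hpq
    refine ⟨0, fun P _ => Or.inl ⟨∅, Finset.empty_subset _, ?_, by simp⟩⟩
    simp; omega
  | succ k ih =>
    intro p q hpq
    match p, q with
    | 0, q => exact ⟨0, fun P _ => Or.inl ⟨∅, Finset.empty_subset _, by simp, by simp⟩⟩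
    | p + 1, 0 => exact ⟨0, fun P _ => Or.inr ⟨∅, Finset.empty_subset _, by simp, by simp⟩⟩
    | p + 1, q + 1 =>
      obtain ⟨n₁, h₁⟩ := ih p (q + 1) (by omega)
      obtain ⟨n₂, h₂⟩ := ih (p + 1) q (by omega)
      refine ⟨n₁ + n₂ + 1, fun P hP => ?_⟩
      obtain ⟨x, hx⟩ : P.Nonempty := Finset.card_pos.mp (by omega)
      set A := (P.erase x).filter (fun y => r x y) with hA
      set B := (P.erase x).filter (fun y => ¬ r x y) with hB
      have hcard : A.card + B.card = (P.erase x).card := by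
        rw [hA, hB]
        exact Finset.card_filter_add_card_filter_not _
      have herase : (P.erase x).card = P.card - 1 := Finset.card_erase_of_mem hx
      have : n₁ ≤ A.card ∨ n₂ ≤ B.card := by omega
      rcases this with hAc | hBc
      · rcases h₁ A hAc with ⟨S, hSA, hScard, hSr⟩ | ⟨S, hSA, hScard, hSr⟩
        · -- extend with x
          have hxS : x ∉ S := fun hxs => by
            have := hSA hxs
            simp [hA, Finset.mem_filter, Finset.mem_erase] at this
          refine Or.inl ⟨insert x S, ?_, ?_, ?_⟩
          · intro y hy
            rcases Finset.mem_insert.mp hy with rfl | hy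
            · exact hx
            · exact Finset.mem_of_mem_erase ((Finset.filter_subset _ _) (hSA hy))
          · rw [Finset.card_insert_of_notMem hxS, hScard]
          · intro a ha b hb hab
            rcases Finset.mem_insert.mp ha with rfl | haS
            · rcases Finset.mem_insert.mp hb with rfl | hbS
              · exact absurd rfl hab
              · have := hSA hbS
                simp only [hA, Finset.mem_filter] at this
                exact this.2
            · rcases Finset.mem_insert.mp hb with rfl | hbS
              · have := hSA haS
                simp only [hA, Finset.mem_filter] at this
                exact hsym _ _ this.2
              · exact hSr a haS b hbS hab
        · exact Or.inr ⟨S, hSA.trans ((Finset.filter_subset _ _).trans (Finset.erase_subset _ _)),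
            hScard, hSr⟩
      · rcases h₂ B hBc with ⟨S, hSB, hScard, hSr⟩ | ⟨S, hSB, hScard, hSr⟩
        · exact Or.inl ⟨S, hSB.trans ((Finset.filter_subset _ _).trans (Finset.erase_subset _ _)),
            hScard, hSr⟩
        · have hxS : x ∉ S := fun hxs => by
            have := hSB hxs
            simp [hB, Finset.mem_filter, Finset.mem_erase] at this
          refine Or.inr ⟨insert x S, ?_, ?_, ?_⟩
          · intro y hy
            rcases Finset.mem_insert.mp hy with rfl | hy
            · exact hx
            · exact Finset.mem_of_mem_erase ((Finset.filter_subset _ _) (hSB hy))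
          · rw [Finset.card_insert_of_notMem hxS, hScard]
          · intro a ha b hb hab
            rcases Finset.mem_insert.mp ha with rfl | haS
            · rcases Finset.mem_insert.mp hb with rfl | hbS
              · exact absurd rfl hab
              · have := hSB hbS
                simp only [hB, Finset.mem_filter] at this
                exact this.2
            · rcases Finset.mem_insert.mp hb with rfl | hbS
              · have := hSB haS
                simp only [hB, Finset.mem_filter] at this
                exact fun hr => this.2 (hsym _ _ hr)
              · exact hSr a haS b hbS hab

/-- Condition `Φ_m`: for every `m`-element subset `P` of `G` there exist two distinct
elements `a, b ∈ P` such that `{a,b}⁻¹{a,b} ⊆ M`, i.e. `1 ∈ M`, `a⁻¹b ∈ M`, `b⁻¹a ∈ M`. -/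
def PhiCond {G : Type*} [Group G] (m : ℕ) (M : Set G) : Prop :=
  ∀ P : Finset G, P.card = m → ∃ a ∈ P, ∃ b ∈ P, a ≠ b ∧
    (1 : G) ∈ M ∧ a⁻¹ * b ∈ M ∧ b⁻¹ * a ∈ M

/-- `M` is vast if it satisfies `Φ_m` for some positive integer `m`. -/
def IsVast {G : Type*} [Group G] (M : Set G) : Prop := ∃ m : ℕ, 0 < m ∧ PhiCond m M

theorem stmt_7 {G : Type*} [Group G] [Infinite G] (M₁ M₂ : Set G)
    (h₁ : IsVast M₁) (h₂ : IsVast M₂) :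
    IsVast (M₁ ∩ M₂) := by
  classical
  obtain ⟨m₁, hm₁, hΦ₁⟩ := h₁
  obtain ⟨m₂, hm₂, hΦ₂⟩ := h₂
  -- 1 ∈ M₁
  obtain ⟨P₁, hP₁⟩ := Infinite.exists_subset_card_eq G m₁
  obtain ⟨_, _, _, _, _, h1M₁, _⟩ := hΦ₁ P₁ hP₁
  -- the "bad for M₁" relation
  set r : G → G → Prop := fun a b => ¬ (a⁻¹ * b ∈ M₁ ∧ b⁻¹ * a ∈ M₁) with hr
  have hsym : ∀ a b, r a b → r b a := fun a b h hc => h ⟨hc.2, hc.1⟩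
  obtain ⟨n, hn⟩ := ramsey_aux r hsym m₁ m₂
  refine ⟨n + 1, Nat.succ_pos n, fun P hP => ?_⟩
  rcases hn P (by omega) with ⟨S, hSP, hScard, hSr⟩ | ⟨S, hSP, hScard, hSr⟩
  · -- everything in S is pairwise bad for M₁: contradicts Φ_{m₁}
    obtain ⟨a, ha, b, hb, hab, _, hab₁, hba₁⟩ := hΦ₁ S hScard
    exact absurd ⟨hab₁, hba₁⟩ (hSr a ha b hb hab)
  · -- everything in S is pairwise good for M₁; apply Φ_{m₂}
    obtain ⟨a, ha, b, hb, hab, h1M₂, hab₂, hba₂⟩ := hΦ₂ S hScard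
    have hgood := not_not.mp (hSr a ha b hb hab)
    exact ⟨a, hSP ha, b, hSP hb, hab, ⟨h1M₁, h1M₂⟩, ⟨hgood.1, hab₂⟩, ⟨hgood.2, hba₂⟩⟩
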